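/- Let g > 0, L_ℓ, L_r > 0, T > 0. Let (h_ℓ, v_ℓ) be a continuously differentiable solution on [0,T] × [0,L_ℓ] and (h_r, v_r) a continuously differentiable solution on [0,T] × [0,L_r] of the homogeneous shallow water equations ∂ₜh + ∂ₓ(hv) = 0, ∂ₜ(hv) + ∂ₓ(hv² + ½gh²) = 0, with h_ℓ, h_r > 0. Assume the no-flux external boundary conditions v_ℓ(t, 0) = 0 and v_r(t, L_r) = 0, and the junction conditions h_ℓ(t, L_ℓ) = h_r(t, 0) and (h_ℓ v_ℓ)(t, L_ℓ) = (h_r v_r)(t, 0) for all t ∈ [0,T]. Then for all t ∈ [0,T], ∫₀^{L_ℓ} η(h_ℓ, v_ℓ)(t,x) dx + ∫₀^{L_r} η(h_r, v_r)(t,x) dx = ∫₀^{L_ℓ} η(h_ℓ, v_ℓ)(0,x) dx + ∫₀^{L_r} η(h_r, v_r)(0,x) dx; in particular the total entropy is non-increasing in time. -/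

import Mathlib

open Set MeasureTheory intervalIntegral

namespace SWaux

/-- Partial derivative of a section in the first variable, at interior points. -/
lemma sectionDeriv_fst {f : ℝ × ℝ → ℝ} {T L : ℝ}
    (hf : ContDiffOn ℝ 1 f (Set.Icc 0 T ×ˢ Set.Icc 0 L)) {p : ℝ × ℝ}
    (hp : p ∈ Set.Ioo (0:ℝ) T ×ˢ Set.Ioo (0:ℝ) L) :
    HasDerivAt (fun s => f (s, p.2))
      (fderivWithin ℝ f (Set.Icc 0 T ×ˢ Set.Icc 0 L) p ((1:ℝ), (0:ℝ))) p.1 := by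
  have hop : IsOpen (Set.Ioo (0:ℝ) T ×ˢ Set.Ioo (0:ℝ) L) := isOpen_Ioo.prod isOpen_Ioo
  have hnh : Set.Icc (0:ℝ) T ×ˢ Set.Icc (0:ℝ) L ∈ nhds p :=
    Filter.mem_of_superset (hop.mem_nhds hp)
      (Set.prod_mono Set.Ioo_subset_Icc_self Set.Ioo_subset_Icc_self)
  have hdiff : DifferentiableAt ℝ f p := (hf.contDiffAt hnh).differentiableAt one_ne_zero
  rw [fderivWithin_of_mem_nhds hnh]
  have h1 : HasDerivAt (fun s : ℝ => (s, p.2)) ((1:ℝ), (0:ℝ)) p.1 :=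
    (hasDerivAt_id p.1).prodMk (hasDerivAt_const p.1 p.2)
  exact hdiff.hasFDerivAt.comp_hasDerivAt p.1 h1

/-- Partial derivative of a section in the second variable, at interior points. -/
lemma sectionDeriv_snd {f : ℝ × ℝ → ℝ} {T L : ℝ}
    (hf : ContDiffOn ℝ 1 f (Set.Icc 0 T ×ˢ Set.Icc 0 L)) {p : ℝ × ℝ}
    (hp : p ∈ Set.Ioo (0:ℝ) T ×ˢ Set.Ioo (0:ℝ) L) :
    HasDerivAt (fun y => f (p.1, y))
      (fderivWithin ℝ f (Set.Icc 0 T ×ˢ Set.Icc 0 L) p ((0:ℝ), (1:ℝ))) p.2 := by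
  have hop : IsOpen (Set.Ioo (0:ℝ) T ×ˢ Set.Ioo (0:ℝ) L) := isOpen_Ioo.prod isOpen_Ioo
  have hnh : Set.Icc (0:ℝ) T ×ˢ Set.Icc (0:ℝ) L ∈ nhds p :=
    Filter.mem_of_superset (hop.mem_nhds hp)
      (Set.prod_mono Set.Ioo_subset_Icc_self Set.Ioo_subset_Icc_self)
  have hdiff : DifferentiableAt ℝ f p := (hf.contDiffAt hnh).differentiableAt one_ne_zero
  rw [fderivWithin_of_mem_nhds hnh]
  have h1 : HasDerivAt (fun y : ℝ => (p.1, y)) ((0:ℝ), (1:ℝ)) p.2 :=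
    (hasDerivAt_const p.2 p.1).prodMk (hasDerivAt_id p.2)
  exact hdiff.hasFDerivAt.comp_hasDerivAt p.2 h1

/-- entropy derivative combination -/
lemma etaDeriv (g : ℝ) {a b : ℝ → ℝ} {a' b' s : ℝ}
    (ha : HasDerivAt a a' s) (hb : HasDerivAt b b' s) :
    HasDerivAt (fun s => (1/2) * a s * b s ^ 2 + (g/2) * a s ^ 2)
      ((1/2) * a' * b s ^ 2 + a s * b s * b' + g * a s * a') s := by
  have h := ((ha.const_mul (1/2 : ℝ)).fun_mul (hb.fun_pow 2)).fun_add ((ha.fun_pow 2).const_mul (g/2))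
  refine h.congr_deriv ?_
  push_cast
  ring

/-- flux derivative combination -/
lemma fluxDeriv (g : ℝ) {a b : ℝ → ℝ} {a' b' s : ℝ}
    (ha : HasDerivAt a a' s) (hb : HasDerivAt b b' s) :
    HasDerivAt (fun y => b y * ((1/2) * a y * b y ^ 2 + g * a y ^ 2))
      (b' * ((1/2) * a s * b s ^ 2 + g * a s ^ 2)
        + b s * ((1/2) * a' * b s ^ 2 + a s * b s * b' + 2 * g * a s * a')) s := by
  have h := hb.fun_mul (((ha.const_mul (1/2 : ℝ)).fun_mul (hb.fun_pow 2)).fun_add ((ha.fun_pow 2).const_mul g))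
  refine h.congr_deriv ?_
  push_cast
  ring

lemma momfluxDeriv (g : ℝ) {a b : ℝ → ℝ} {a' b' s : ℝ}
    (ha : HasDerivAt a a' s) (hb : HasDerivAt b b' s) :
    HasDerivAt (fun y => a y * b y ^ 2 + (1/2) * g * a y ^ 2)
      (a' * b s ^ 2 + 2 * a s * b s * b' + g * a s * a') s := by
  have h := (ha.fun_mul (hb.fun_pow 2)).fun_add ((ha.fun_pow 2).const_mul ((1/2) * g))
  refine h.congr_deriv ?_
  push_cast
  ring


/-- time derivative of the entropy density, expressed via `fderivWithin`. -/
noncomputable def Pf (g : ℝ) (h v : ℝ × ℝ → ℝ) (R : Set (ℝ × ℝ)) (p : ℝ × ℝ) : ℝ :=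
  (1/2) * (fderivWithin ℝ h R p ((1:ℝ),(0:ℝ))) * (v p) ^ 2
    + h p * v p * (fderivWithin ℝ v R p ((1:ℝ),(0:ℝ)))
    + g * h p * (fderivWithin ℝ h R p ((1:ℝ),(0:ℝ)))

/-- space derivative of the entropy flux, expressed via `fderivWithin`. -/
noncomputable def Qf (g : ℝ) (h v : ℝ × ℝ → ℝ) (R : Set (ℝ × ℝ)) (p : ℝ × ℝ) : ℝ :=
  (fderivWithin ℝ v R p ((0:ℝ),(1:ℝ))) * ((1/2) * h p * (v p) ^ 2 + g * (h p) ^ 2)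
    + v p * ((1/2) * (fderivWithin ℝ h R p ((0:ℝ),(1:ℝ))) * (v p) ^ 2
        + h p * v p * (fderivWithin ℝ v R p ((0:ℝ),(1:ℝ)))
        + 2 * g * h p * (fderivWithin ℝ h R p ((0:ℝ),(1:ℝ))))

lemma fderivWithin_apply_continuousOn {f : ℝ × ℝ → ℝ} {R : Set (ℝ × ℝ)}
    (hf : ContDiffOn ℝ 1 f R) (hR : UniqueDiffOn ℝ R) (w : ℝ × ℝ) :
    ContinuousOn (fun p => fderivWithin ℝ f R p w) R := by
  have h := hf.continuousOn_fderivWithin hR le_rfl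
  exact (ContinuousLinearMap.apply ℝ ℝ w).continuous.comp_continuousOn h

/-- Entropy balance law for a single canal. -/
lemma canal (g T L : ℝ) (hT : 0 < T) (hL : 0 < L) (h v : ℝ × ℝ → ℝ)
    (hh : ContDiffOn ℝ 1 h (Set.Icc 0 T ×ˢ Set.Icc 0 L))
    (hv : ContDiffOn ℝ 1 v (Set.Icc 0 T ×ˢ Set.Icc 0 L))
    (mass : ∀ t ∈ Set.Icc (0:ℝ) T, ∀ x ∈ Set.Icc (0:ℝ) L,
      deriv (fun s => h (s, x)) t + deriv (fun y => h (t, y) * v (t, y)) x = 0)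
    (mom : ∀ t ∈ Set.Icc (0:ℝ) T, ∀ x ∈ Set.Icc (0:ℝ) L,
      deriv (fun s => h (s, x) * v (s, x)) t +
        deriv (fun y => h (t, y) * v (t, y) ^ 2 + (1 / 2) * g * h (t, y) ^ 2) x = 0)
    (t : ℝ) (ht : t ∈ Set.Icc (0:ℝ) T) :
    (∫ x in (0:ℝ)..L, ((1 / 2) * h (t, x) * v (t, x) ^ 2 + (g / 2) * h (t, x) ^ 2))
      = (∫ x in (0:ℝ)..L, ((1 / 2) * h (0, x) * v (0, x) ^ 2 + (g / 2) * h (0, x) ^ 2))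
        - ∫ s in (0:ℝ)..t,
            (v (s, L) * ((1/2) * h (s, L) * v (s, L) ^ 2 + g * h (s, L) ^ 2)
              - v (s, 0) * ((1/2) * h (s, 0) * v (s, 0) ^ 2 + g * h (s, 0) ^ 2)) := by
  rcases eq_or_lt_of_le ht.1 with h0 | h0
  · rw [← h0]; simp
  set R : Set (ℝ × ℝ) := Set.Icc 0 T ×ˢ Set.Icc 0 L with hRdef
  have hRu : UniqueDiffOn ℝ R := by
    apply uniqueDiffOn_convex ((convex_Icc _ _).prod (convex_Icc _ _))
    rw [interior_prod_eq, interior_Icc, interior_Icc]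
    exact (Set.nonempty_Ioo.2 hT).prod (Set.nonempty_Ioo.2 hL)
  have hhc : ContinuousOn h R := hh.continuousOn
  have hvc : ContinuousOn v R := hv.continuousOn
  -- continuity of P, Q, G, η on R
  have hHt := fderivWithin_apply_continuousOn hh hRu ((1:ℝ),(0:ℝ))
  have hHx := fderivWithin_apply_continuousOn hh hRu ((0:ℝ),(1:ℝ))
  have hVt := fderivWithin_apply_continuousOn hv hRu ((1:ℝ),(0:ℝ))
  have hVx := fderivWithin_apply_continuousOn hv hRu ((0:ℝ),(1:ℝ))
  have hPc : ContinuousOn (Pf g h v R) R := by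
    unfold Pf
    exact (((continuousOn_const.mul hHt).mul (hvc.pow 2)).add
      (((hhc.mul hvc).mul hVt))).add ((continuousOn_const.mul hhc).mul hHt)
  have hQc : ContinuousOn (Qf g h v R) R := by
    unfold Qf
    exact (hVx.mul (((continuousOn_const.mul hhc).mul (hvc.pow 2)).add
        (continuousOn_const.mul (hhc.pow 2)))).add
      (hvc.mul ((((continuousOn_const.mul hHx).mul (hvc.pow 2)).add
        ((hhc.mul hvc).mul hVx)).add (((continuousOn_const.mul hhc).mul hHx))))
  have hGc : ContinuousOn (fun p => v p * ((1/2) * h p * (v p) ^ 2 + g * (h p) ^ 2)) R :=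
    hvc.mul (((continuousOn_const.mul hhc).mul (hvc.pow 2)).add
      (continuousOn_const.mul (hhc.pow 2)))
  have hEc : ContinuousOn (fun p => (1/2) * h p * (v p) ^ 2 + (g/2) * (h p) ^ 2) R :=
    ((continuousOn_const.mul hhc).mul (hvc.pow 2)).add (continuousOn_const.mul (hhc.pow 2))
  -- the key pointwise entropy identity at interior points
  have hident : ∀ p ∈ Set.Ioo (0:ℝ) T ×ˢ Set.Ioo (0:ℝ) L,
      Pf g h v R p + Qf g h v R p = 0 := by
    rintro ⟨s, x⟩ hp
    obtain ⟨hps, hpx⟩ := hp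
    have Hht := sectionDeriv_fst hh (Set.mk_mem_prod hps hpx)
    have Hvt := sectionDeriv_fst hv (Set.mk_mem_prod hps hpx)
    have Hhx := sectionDeriv_snd hh (Set.mk_mem_prod hps hpx)
    have Hvx := sectionDeriv_snd hv (Set.mk_mem_prod hps hpx)
    simp only at Hht Hvt Hhx Hvx
    have hsI : s ∈ Set.Icc (0:ℝ) T := ⟨hps.1.le, hps.2.le⟩
    have hxI : x ∈ Set.Icc (0:ℝ) L := ⟨hpx.1.le, hpx.2.le⟩
    have e1 := mass s hsI x hxI
    have e2 := mom s hsI x hxI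
    rw [Hht.deriv, (Hhx.fun_mul Hvx).deriv] at e1
    have hmf := momfluxDeriv g Hhx Hvx
    rw [(Hht.fun_mul Hvt).deriv, hmf.deriv] at e2
    unfold Pf Qf
    linear_combination (g * h (s, x) - (1/2) * (v (s, x)) ^ 2) * e1 + (v (s, x)) * e2
  -- section maps
  have hmapT : ∀ {x : ℝ}, x ∈ Set.Icc (0:ℝ) L →
      Set.MapsTo (fun s : ℝ => (s, x)) (Set.Icc 0 t) R := by
    intro x hx s hs
    exact Set.mk_mem_prod ⟨hs.1, hs.2.trans ht.2⟩ hx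
  have hmapX : ∀ {s : ℝ}, s ∈ Set.Icc (0:ℝ) T →
      Set.MapsTo (fun y : ℝ => (s, y)) (Set.Icc 0 L) R := by
    intro s hs y hy; exact Set.mk_mem_prod hs hy
  -- Step 1: fundamental theorem of calculus in time, at interior x
  have step1 : ∀ x ∈ Set.Ioo (0:ℝ) L,
      (∫ s in (0:ℝ)..t, Pf g h v R (s, x))
        = ((1/2) * h (t,x) * v (t,x) ^ 2 + (g/2) * h (t,x) ^ 2)
          - ((1/2) * h (0,x) * v (0,x) ^ 2 + (g/2) * h (0,x) ^ 2) := by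
    intro x hx
    have hxI : x ∈ Set.Icc (0:ℝ) L := Set.Ioo_subset_Icc_self hx
    have hmap := hmapT hxI
    have hcont : ContinuousOn
        (fun s => (1/2) * h (s,x) * v (s,x) ^ 2 + (g/2) * h (s,x) ^ 2) (Set.Icc 0 t) :=
      hEc.comp ((continuous_id.prodMk continuous_const).continuousOn) hmap
    have hPint : IntervalIntegrable (fun s => Pf g h v R (s,x)) MeasureTheory.volume 0 t := by
      apply ContinuousOn.intervalIntegrable
      rw [Set.uIcc_of_le ht.1]
      exact hPc.comp ((continuous_id.prodMk continuous_const).continuousOn) hmap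
    have hder : ∀ s ∈ Set.Ioo (0:ℝ) t, HasDerivWithinAt
        (fun s => (1/2) * h (s,x) * v (s,x) ^ 2 + (g/2) * h (s,x) ^ 2)
        (Pf g h v R (s,x)) (Set.Ioi s) s := by
      intro s hs
      have hsint : ((s, x) : ℝ × ℝ) ∈ Set.Ioo (0:ℝ) T ×ˢ Set.Ioo (0:ℝ) L :=
        Set.mk_mem_prod ⟨hs.1, hs.2.trans_le ht.2⟩ hx
      have H := etaDeriv g (sectionDeriv_fst hh hsint) (sectionDeriv_fst hv hsint)
      exact H.hasDerivWithinAt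
    exact intervalIntegral.integral_eq_sub_of_hasDeriv_right_of_le ht.1 hcont hder hPint
  -- interval integrability of the entropy at fixed times
  have hEi : ∀ A ∈ Set.Icc (0:ℝ) T, IntervalIntegrable
      (fun x => (1/2) * h (A,x) * v (A,x) ^ 2 + (g/2) * h (A,x) ^ 2)
      MeasureTheory.volume 0 L := by
    intro A hA
    apply ContinuousOn.intervalIntegrable
    rw [Set.uIcc_of_le hL.le]
    exact hEc.comp ((continuous_const.prodMk continuous_id).continuousOn) (hmapX hA)
  -- Step 2
  have step2 :
      (∫ x in (0:ℝ)..L, ((1/2) * h (t,x) * v (t,x) ^ 2 + (g/2) * h (t,x) ^ 2))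
        - (∫ x in (0:ℝ)..L, ((1/2) * h (0,x) * v (0,x) ^ 2 + (g/2) * h (0,x) ^ 2))
      = ∫ x in (0:ℝ)..L, (∫ s in (0:ℝ)..t, Pf g h v R (s,x)) := by
    rw [← intervalIntegral.integral_sub (hEi t ht) (hEi 0 ⟨le_refl 0, hT.le⟩)]
    apply intervalIntegral.integral_congr_ae
    filter_upwards [(Set.countable_singleton L).ae_notMem MeasureTheory.volume] with x hxL hxI
    rw [Set.uIoc_of_le hL.le] at hxI
    have hxoo : x ∈ Set.Ioo (0:ℝ) L :=
      ⟨hxI.1, lt_of_le_of_ne hxI.2 (by simpa using hxL)⟩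
    exact (step1 x hxoo).symm
  -- Step 3 : Fubini
  have step3 :
      (∫ x in (0:ℝ)..L, (∫ s in (0:ℝ)..t, Pf g h v R (s,x)))
        = ∫ s in (0:ℝ)..t, (∫ x in (0:ℝ)..L, Pf g h v R (s,x)) := by
    simp_rw [intervalIntegral.integral_of_le hL.le, intervalIntegral.integral_of_le h0.le]
    apply MeasureTheory.integral_integral_swap
    rw [MeasureTheory.Measure.prod_restrict]
    apply MeasureTheory.IntegrableOn.mono_set
      (t := Set.Icc (0:ℝ) L ×ˢ Set.Icc (0:ℝ) t)
      ?_ (Set.prod_mono Set.Ioc_subset_Icc_self Set.Ioc_subset_Icc_self)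
    apply ContinuousOn.integrableOn_compact (isCompact_Icc.prod isCompact_Icc)
    have hsw : Set.MapsTo (Prod.swap : ℝ × ℝ → ℝ × ℝ)
        (Set.Icc (0:ℝ) L ×ˢ Set.Icc (0:ℝ) t) R := by
      rintro ⟨x, s⟩ ⟨hx, hs⟩
      exact Set.mk_mem_prod ⟨hs.1, hs.2.trans ht.2⟩ hx
    exact hPc.comp continuous_swap.continuousOn hsw
  -- Step 4 : FTC in space at interior times
  have step4 : ∀ s ∈ Set.Ioo (0:ℝ) t,
      (∫ x in (0:ℝ)..L, Pf g h v R (s,x))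
        = -(v (s,L) * ((1/2) * h (s,L) * v (s,L) ^ 2 + g * h (s,L) ^ 2)
            - v (s,0) * ((1/2) * h (s,0) * v (s,0) ^ 2 + g * h (s,0) ^ 2)) := by
    intro s hs
    have hsT : s ∈ Set.Ioo (0:ℝ) T := ⟨hs.1, hs.2.trans_le ht.2⟩
    have hsI : s ∈ Set.Icc (0:ℝ) T := ⟨hsT.1.le, hsT.2.le⟩
    have hQint : IntervalIntegrable (fun x => Qf g h v R (s,x)) MeasureTheory.volume 0 L := by
      apply ContinuousOn.intervalIntegrable
      rw [Set.uIcc_of_le hL.le]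
      exact hQc.comp ((continuous_const.prodMk continuous_id).continuousOn) (hmapX hsI)
    have hcongr : (∫ x in (0:ℝ)..L, Pf g h v R (s,x))
        = ∫ x in (0:ℝ)..L, -Qf g h v R (s,x) := by
      apply intervalIntegral.integral_congr_ae
      filter_upwards [(Set.countable_singleton L).ae_notMem MeasureTheory.volume] with x hxL hxI
      rw [Set.uIoc_of_le hL.le] at hxI
      have hxoo : x ∈ Set.Ioo (0:ℝ) L :=
        ⟨hxI.1, lt_of_le_of_ne hxI.2 (by simpa using hxL)⟩
      have := hident (s, x) (Set.mk_mem_prod hsT hxoo)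
      linarith
    rw [hcongr, intervalIntegral.integral_neg]
    congr 1
    have hGcont : ContinuousOn
        (fun y => v (s,y) * ((1/2) * h (s,y) * v (s,y) ^ 2 + g * h (s,y) ^ 2))
        (Set.Icc 0 L) :=
      hGc.comp ((continuous_const.prodMk continuous_id).continuousOn) (hmapX hsI)
    have hder : ∀ x ∈ Set.Ioo (0:ℝ) L, HasDerivWithinAt
        (fun y => v (s,y) * ((1/2) * h (s,y) * v (s,y) ^ 2 + g * h (s,y) ^ 2))
        (Qf g h v R (s,x)) (Set.Ioi x) x := by
      intro x hx
      have hsint : ((s,x) : ℝ × ℝ) ∈ Set.Ioo (0:ℝ) T ×ˢ Set.Ioo (0:ℝ) L :=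
        Set.mk_mem_prod hsT hx
      have H := fluxDeriv g (sectionDeriv_snd hh hsint) (sectionDeriv_snd hv hsint)
      exact H.hasDerivWithinAt
    exact intervalIntegral.integral_eq_sub_of_hasDeriv_right_of_le hL.le hGcont hder hQint
  -- combine
  have stepB : (∫ s in (0:ℝ)..t, (∫ x in (0:ℝ)..L, Pf g h v R (s,x)))
      = -∫ s in (0:ℝ)..t,
          (v (s,L) * ((1/2) * h (s,L) * v (s,L) ^ 2 + g * h (s,L) ^ 2)
            - v (s,0) * ((1/2) * h (s,0) * v (s,0) ^ 2 + g * h (s,0) ^ 2)) := by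
    rw [← intervalIntegral.integral_neg]
    apply intervalIntegral.integral_congr_ae
    filter_upwards [(Set.countable_singleton t).ae_notMem MeasureTheory.volume] with s hst hsI
    rw [Set.uIoc_of_le h0.le] at hsI
    have hsoo : s ∈ Set.Ioo (0:ℝ) t :=
      ⟨hsI.1, lt_of_le_of_ne hsI.2 (by simpa using hst)⟩
    exact step4 s hsoo
  linarith [step2, step3, stepB]

lemma contOn_section {f : ℝ × ℝ → ℝ} {T L t x : ℝ}
    (hf : ContinuousOn f (Set.Icc 0 T ×ˢ Set.Icc 0 L))
    (htT : t ≤ T) (hx : x ∈ Set.Icc (0:ℝ) L) :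
    ContinuousOn (fun s => f (s, x)) (Set.Icc 0 t) := by
  apply hf.comp ((continuous_id.prodMk continuous_const).continuousOn)
  intro s hs
  exact Set.mk_mem_prod ⟨hs.1, hs.2.trans htT⟩ hx

end SWaux

/-- On a 2-canal network with no-flux external boundary conditions and junction
conditions (continuity of height and of mass flux), smooth positive solutions of
the homogeneous shallow water equations conserve the total entropy
`∫ η(h_ℓ,v_ℓ) + ∫ η(h_r,v_r)` with `η = ½hv² + (g/2)h²`; in particular it is
non-increasing in time. -/
theorem shallow_water_network_entropy_conservation
    (g Ll Lr T : ℝ) (hg : 0 < g) (hLl : 0 < Ll) (hLr : 0 < Lr) (hT : 0 < T)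
    (hl vl hr vr : ℝ × ℝ → ℝ)
    (hhl : ContDiffOn ℝ 1 hl (Set.Icc 0 T ×ˢ Set.Icc 0 Ll))
    (hvl : ContDiffOn ℝ 1 vl (Set.Icc 0 T ×ˢ Set.Icc 0 Ll))
    (hhr : ContDiffOn ℝ 1 hr (Set.Icc 0 T ×ˢ Set.Icc 0 Lr))
    (hvr : ContDiffOn ℝ 1 vr (Set.Icc 0 T ×ˢ Set.Icc 0 Lr))
    (hposl : ∀ t ∈ Set.Icc (0:ℝ) T, ∀ x ∈ Set.Icc (0:ℝ) Ll, 0 < hl (t, x))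
    (hposr : ∀ t ∈ Set.Icc (0:ℝ) T, ∀ x ∈ Set.Icc (0:ℝ) Lr, 0 < hr (t, x))
    (massl : ∀ t ∈ Set.Icc (0:ℝ) T, ∀ x ∈ Set.Icc (0:ℝ) Ll,
      deriv (fun s => hl (s, x)) t + deriv (fun y => hl (t, y) * vl (t, y)) x = 0)
    (moml : ∀ t ∈ Set.Icc (0:ℝ) T, ∀ x ∈ Set.Icc (0:ℝ) Ll,
      deriv (fun s => hl (s, x) * vl (s, x)) t +
        deriv (fun y => hl (t, y) * vl (t, y) ^ 2 + (1 / 2) * g * hl (t, y) ^ 2) x = 0)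
    (massr : ∀ t ∈ Set.Icc (0:ℝ) T, ∀ x ∈ Set.Icc (0:ℝ) Lr,
      deriv (fun s => hr (s, x)) t + deriv (fun y => hr (t, y) * vr (t, y)) x = 0)
    (momr : ∀ t ∈ Set.Icc (0:ℝ) T, ∀ x ∈ Set.Icc (0:ℝ) Lr,
      deriv (fun s => hr (s, x) * vr (s, x)) t +
        deriv (fun y => hr (t, y) * vr (t, y) ^ 2 + (1 / 2) * g * hr (t, y) ^ 2) x = 0)
    (bcl : ∀ t ∈ Set.Icc (0:ℝ) T, vl (t, 0) = 0)
    (bcr : ∀ t ∈ Set.Icc (0:ℝ) T, vr (t, Lr) = 0)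
    (junch : ∀ t ∈ Set.Icc (0:ℝ) T, hl (t, Ll) = hr (t, 0))
    (juncq : ∀ t ∈ Set.Icc (0:ℝ) T,
      hl (t, Ll) * vl (t, Ll) = hr (t, 0) * vr (t, 0)) :
    ∀ t ∈ Set.Icc (0:ℝ) T,
      ((∫ x in (0:ℝ)..Ll,
          ((1 / 2) * hl (t, x) * vl (t, x) ^ 2 + (g / 2) * hl (t, x) ^ 2)) +
       (∫ x in (0:ℝ)..Lr,
          ((1 / 2) * hr (t, x) * vr (t, x) ^ 2 + (g / 2) * hr (t, x) ^ 2)))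
      = ((∫ x in (0:ℝ)..Ll,
          ((1 / 2) * hl (0, x) * vl (0, x) ^ 2 + (g / 2) * hl (0, x) ^ 2)) +
         (∫ x in (0:ℝ)..Lr,
          ((1 / 2) * hr (0, x) * vr (0, x) ^ 2 + (g / 2) * hr (0, x) ^ 2))) := by
  intro t ht
  have Hl := SWaux.canal g T Ll hT hLl hl vl hhl hvl massl moml t ht
  have Hr := SWaux.canal g T Lr hT hLr hr vr hhr hvr massr momr t ht
  rw [Hl, Hr]
  -- it suffices that the boundary flux terms cancel
  have hzero : (∫ s in (0:ℝ)..t,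
        (vl (s, Ll) * ((1/2) * hl (s, Ll) * vl (s, Ll) ^ 2 + g * hl (s, Ll) ^ 2)
          - vl (s, 0) * ((1/2) * hl (s, 0) * vl (s, 0) ^ 2 + g * hl (s, 0) ^ 2)))
      + (∫ s in (0:ℝ)..t,
        (vr (s, Lr) * ((1/2) * hr (s, Lr) * vr (s, Lr) ^ 2 + g * hr (s, Lr) ^ 2)
          - vr (s, 0) * ((1/2) * hr (s, 0) * vr (s, 0) ^ 2 + g * hr (s, 0) ^ 2))) = 0 := by
    have hcA : ContinuousOn (fun s =>
        vl (s, Ll) * ((1/2) * hl (s, Ll) * vl (s, Ll) ^ 2 + g * hl (s, Ll) ^ 2)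
          - vl (s, 0) * ((1/2) * hl (s, 0) * vl (s, 0) ^ 2 + g * hl (s, 0) ^ 2))
        (Set.Icc 0 t) := by
      have c1 := SWaux.contOn_section hhl.continuousOn ht.2 (Set.right_mem_Icc.2 hLl.le)
      have c2 := SWaux.contOn_section hvl.continuousOn ht.2 (Set.right_mem_Icc.2 hLl.le)
      have c3 := SWaux.contOn_section hhl.continuousOn ht.2 (Set.left_mem_Icc.2 hLl.le)
      have c4 := SWaux.contOn_section hvl.continuousOn ht.2 (Set.left_mem_Icc.2 hLl.le)
      exact (c2.mul (((continuousOn_const.mul c1).mul (c2.pow 2)).add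
          (continuousOn_const.mul (c1.pow 2)))).sub
        (c4.mul (((continuousOn_const.mul c3).mul (c4.pow 2)).add
          (continuousOn_const.mul (c3.pow 2))))
    have hcB : ContinuousOn (fun s =>
        vr (s, Lr) * ((1/2) * hr (s, Lr) * vr (s, Lr) ^ 2 + g * hr (s, Lr) ^ 2)
          - vr (s, 0) * ((1/2) * hr (s, 0) * vr (s, 0) ^ 2 + g * hr (s, 0) ^ 2))
        (Set.Icc 0 t) := by
      have c1 := SWaux.contOn_section hhr.continuousOn ht.2 (Set.right_mem_Icc.2 hLr.le)
      have c2 := SWaux.contOn_section hvr.continuousOn ht.2 (Set.right_mem_Icc.2 hLr.le)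
      have c3 := SWaux.contOn_section hhr.continuousOn ht.2 (Set.left_mem_Icc.2 hLr.le)
      have c4 := SWaux.contOn_section hvr.continuousOn ht.2 (Set.left_mem_Icc.2 hLr.le)
      exact (c2.mul (((continuousOn_const.mul c1).mul (c2.pow 2)).add
          (continuousOn_const.mul (c1.pow 2)))).sub
        (c4.mul (((continuousOn_const.mul c3).mul (c4.pow 2)).add
          (continuousOn_const.mul (c3.pow 2))))
    have hiA : IntervalIntegrable (fun s =>
        vl (s, Ll) * ((1/2) * hl (s, Ll) * vl (s, Ll) ^ 2 + g * hl (s, Ll) ^ 2)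
          - vl (s, 0) * ((1/2) * hl (s, 0) * vl (s, 0) ^ 2 + g * hl (s, 0) ^ 2))
        MeasureTheory.volume 0 t :=
      ContinuousOn.intervalIntegrable (by rw [Set.uIcc_of_le ht.1]; exact hcA)
    have hiB : IntervalIntegrable (fun s =>
        vr (s, Lr) * ((1/2) * hr (s, Lr) * vr (s, Lr) ^ 2 + g * hr (s, Lr) ^ 2)
          - vr (s, 0) * ((1/2) * hr (s, 0) * vr (s, 0) ^ 2 + g * hr (s, 0) ^ 2))
        MeasureTheory.volume 0 t :=
      ContinuousOn.intervalIntegrable (by rw [Set.uIcc_of_le ht.1]; exact hcB)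
    rw [← intervalIntegral.integral_add hiA hiB]
    have heq : Set.EqOn (fun s =>
        (vl (s, Ll) * ((1/2) * hl (s, Ll) * vl (s, Ll) ^ 2 + g * hl (s, Ll) ^ 2)
          - vl (s, 0) * ((1/2) * hl (s, 0) * vl (s, 0) ^ 2 + g * hl (s, 0) ^ 2))
        + (vr (s, Lr) * ((1/2) * hr (s, Lr) * vr (s, Lr) ^ 2 + g * hr (s, Lr) ^ 2)
          - vr (s, 0) * ((1/2) * hr (s, 0) * vr (s, 0) ^ 2 + g * hr (s, 0) ^ 2)))
        (fun _ => (0:ℝ)) (Set.uIcc 0 t) := by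
      intro s hs
      rw [Set.uIcc_of_le ht.1] at hs
      have hsT : s ∈ Set.Icc (0:ℝ) T := ⟨hs.1, hs.2.trans ht.2⟩
      have hveq : vl (s, Ll) = vr (s, 0) := by
        have hq := juncq s hsT
        rw [junch s hsT] at hq
        exact mul_left_cancel₀
          (ne_of_gt (hposr s hsT 0 ⟨le_refl 0, hLr.le⟩)) hq
      simp only
      rw [bcl s hsT, bcr s hsT, hveq, junch s hsT]
      ring
    rw [intervalIntegral.integral_congr heq, intervalIntegral.integral_zero]
  linarith [hzero]
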